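/- Any PCP solution over the instance W constructed from a normal system must end with the pair (dd, r_d(fu)·d): if (u_1,v_1),...,(u_m,v_m) is a sequence of pairs from W with u_1⋯u_m = v_1⋯v_m and m ≥ 1, then (u_m, v_m) = (dd, r_d(fu)·d). -/

import Mathlib

/-- The alphabet `{a, b, c, f, d}`: `a, b` are the letters of the normal
system, and `c`, `f`, `d` are new marker letters. -/
inductive Γ | a | b | c | f | d
deriving DecidableEq

/-- `x` is one of the normal-system letters `a, b`. -/
def isAB (x : Γ) : Prop := x = Γ.a ∨ x = Γ.b

/-- The left desynchronization map `ℓ_d`: insert `d` before every letter. -/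
def ld (v : List Γ) : List Γ := v.flatMap (fun x => [Γ.d, x])

/-- The right desynchronization map `r_d`: insert `d` after every letter. -/
def rd (v : List Γ) : List Γ := v.flatMap (fun x => [x, Γ.d])

/-- One derivation step of the normal system with rule set `P`:
`u → v` iff there is a rule `α X ↦ X β` in `P` (the pair `(α, β)`) and a
word `x` with `u = α x` and `v = x β`. -/
def Step (P : List (List Γ × List Γ)) (u v : List Γ) : Prop :=
  ∃ p ∈ P, ∃ x : List Γ, u = p.1 ++ x ∧ v = x ++ p.2

/-- The rules `P` of a normal system over `{a, b}` with all rule words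
nonempty. -/
def GoodRules (P : List (List Γ × List Γ)) : Prop :=
  ∀ p ∈ P, p.1 ≠ [] ∧ p.2 ≠ [] ∧ (∀ x ∈ p.1, isAB x) ∧ (∀ x ∈ p.2, isAB x)

/-- A word over `{a, b}` that is nonempty. -/
def GoodWord (w : List Γ) : Prop := w ≠ [] ∧ ∀ x ∈ w, isAB x

/-- The PCP instance constructed from the normal system `S = (w, P)` and the
target word `u`:
`W = {(d·ℓ_d(fw), dd), (dd, r_d(fu)·d), (da, ad), (db, bd)}
   ∪ {(ℓ_d(c^j f), r_d(f α_j)), (ℓ_d(β_j), r_d(c^j)) : j = 1, ..., t}`,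
where the `j`-th rule (1-indexed) of `P` is `α_j X ↦ X β_j`. -/
def instW (P : List (List Γ × List Γ)) (w u : List Γ) :
    List (List Γ × List Γ) :=
  [(Γ.d :: ld (Γ.f :: w), [Γ.d, Γ.d]),
   ([Γ.d, Γ.d], rd (Γ.f :: u) ++ [Γ.d]),
   ([Γ.d, Γ.a], [Γ.a, Γ.d]),
   ([Γ.d, Γ.b], [Γ.b, Γ.d])] ++
  (P.zipIdx.map Prod.swap).flatMap (fun jp =>
    [(ld (List.replicate (jp.1 + 1) Γ.c ++ [Γ.f]), rd (Γ.f :: jp.2.1)),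
     (ld jp.2.2, rd (List.replicate (jp.1 + 1) Γ.c))])

/-- A PCP instance `W` has a solution: some nonempty sequence of pairs from
`W` has equal concatenations of first components and of second components. -/
def Solution (W : List (List Γ × List Γ)) : Prop :=
  ∃ s : List (List Γ × List Γ), s ≠ [] ∧ (∀ p ∈ s, p ∈ W) ∧
    (s.map Prod.fst).flatten = (s.map Prod.snd).flatten


lemma ld_cons (x : Γ) (t : List Γ) : ld (x :: t) = Γ.d :: x :: ld t := rfl
lemma rd_cons (x : Γ) (t : List Γ) : rd (x :: t) = x :: Γ.d :: rd t := rfl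

lemma ld_ne_nil {v : List Γ} (h : v ≠ []) : ld v ≠ [] := by
  cases v with
  | nil => exact absurd rfl h
  | cons x t => simp [ld_cons]

lemma ld_getLast? {v : List Γ} (h : v ≠ []) : (ld v).getLast? = v.getLast? := by
  induction v with
  | nil => exact absurd rfl h
  | cons x t ih =>
    cases t with
    | nil => rfl
    | cons y t' =>
      rw [ld_cons, show (Γ.d :: x :: ld (y :: t')) = [Γ.d, x] ++ ld (y :: t') from rfl,
        List.getLast?_append_of_ne_nil _ (ld_ne_nil (by simp)), ih (by simp)]
      simp [List.getLast?]

lemma rd_getLast? {v : List Γ} (h : v ≠ []) : (rd v).getLast? = some Γ.d := by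
  induction v with
  | nil => exact absurd rfl h
  | cons x t ih =>
    cases t with
    | nil => rfl
    | cons y t' =>
      rw [rd_cons, show (x :: Γ.d :: rd (y :: t')) = [x, Γ.d] ++ rd (y :: t') from rfl,
        List.getLast?_append_of_ne_nil _ (by simp [rd_cons]), ih (by simp)]

lemma getLast?_isAB {v : List Γ} (h : v ≠ []) (hab : ∀ x ∈ v, isAB x) :
    v.getLast? ≠ some Γ.d := by
  rw [List.getLast?_eq_getLast h]
  rcases hab _ (List.getLast_mem h) with h1 | h1 <;> simp [h1]

theorem pcp_solution_ends_with_final_pair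
    (P : List (List Γ × List Γ)) (w u : List Γ)
    (hP : GoodRules P) (hw : GoodWord w) (hu : GoodWord u)
    (s : List (List Γ × List Γ)) (hs : s ≠ [])
    (hmem : ∀ p ∈ s, p ∈ instW P w u)
    (heq : (s.map Prod.fst).flatten = (s.map Prod.snd).flatten) :
    s.getLast? = some ([Γ.d, Γ.d], rd (Γ.f :: u) ++ [Γ.d]) := by
  classical
  have hp : s.getLast hs ∈ s := List.getLast_mem hs
  set p := s.getLast hs with hpdef
  have hmemp : p ∈ instW P w u := hmem p hp
  -- nonemptiness + snd ends with d, via case analysis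
  have hcases := hmemp
  simp only [instW, List.mem_append, List.mem_cons, List.not_mem_nil, or_false,
    List.mem_flatMap] at hcases
  have hsnd : ∀ jp : ℕ × List Γ × List Γ, jp ∈ P.zipIdx.map Prod.swap → jp.2 ∈ P := by
    intro jp hjp
    obtain ⟨q, hq, rfl⟩ := List.mem_map.1 hjp
    exact List.fst_mem_of_mem_zipIdx hq
  have hp1ne : p.1 ≠ [] := by
    rcases hcases with (h | h | h | h) | ⟨jp, hjp, h⟩
    · simp [h]
    · simp [h]
    · simp [h]
    · simp [h]
    · rcases (hP jp.2 (hsnd jp hjp)) with ⟨hα, hβ, _⟩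
      rcases h with h | h
      · rw [h]; exact ld_ne_nil (by simp)
      · rw [h]; exact ld_ne_nil hβ
  have hp2d : p.2.getLast? = some Γ.d := by
    rcases hcases with (h | h | h | h) | ⟨jp, hjp, h⟩
    · simp [h]
    · rw [h]; simp
    · rw [h]; decide
    · rw [h]; decide
    · rcases h with h | h
      · rw [h]; exact rd_getLast? (by simp)
      · rw [h]; exact rd_getLast? (by simp)
  have hp2ne : p.2 ≠ [] := by
    intro hnil; rw [hnil] at hp2d; simp at hp2d
  -- last letters of the two concatenations agree
  have hdrop : s.dropLast ++ [p] = s := List.dropLast_append_getLast hs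
  have key : p.1.getLast? = p.2.getLast? := by
    have h1 : (s.map Prod.fst).flatten = (s.dropLast.map Prod.fst).flatten ++ p.1 := by
      conv_lhs => rw [← hdrop]
      simp
    have h2 : (s.map Prod.snd).flatten = (s.dropLast.map Prod.snd).flatten ++ p.2 := by
      conv_lhs => rw [← hdrop]
      simp
    have := congrArg List.getLast? heq
    rw [h1, h2, List.getLast?_append_of_ne_nil _ hp1ne,
      List.getLast?_append_of_ne_nil _ hp2ne] at this
    exact this
  have hp1d : p.1.getLast? = some Γ.d := key.trans hp2d
  -- only the second pair has fst ending in d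
  have hpeq : p = ([Γ.d, Γ.d], rd (Γ.f :: u) ++ [Γ.d]) := by
    rcases hcases with (h | h | h | h) | ⟨jp, hjp, h⟩
    · exfalso
      rw [h] at hp1d
      rw [show (Γ.d :: ld (Γ.f :: w)) = [Γ.d] ++ ld (Γ.f :: w) from rfl,
        List.getLast?_append_of_ne_nil _ (ld_ne_nil (by simp)),
        ld_getLast? (by simp : (Γ.f :: w) ≠ []),
        show (Γ.f :: w) = [Γ.f] ++ w from rfl,
        List.getLast?_append_of_ne_nil _ hw.1] at hp1d
      exact getLast?_isAB hw.1 hw.2 hp1d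
    · exact h
    · rw [h] at hp1d; exact absurd hp1d (by decide)
    · rw [h] at hp1d; exact absurd hp1d (by decide)
    · exfalso
      rcases (hP jp.2 (hsnd jp hjp)) with ⟨hα, hβ, _, hβab⟩
      rcases h with h | h
      · rw [h, ld_getLast? (by simp),
          List.getLast?_append_of_ne_nil _ (by simp : ([Γ.f] : List Γ) ≠ [])] at hp1d
        simp at hp1d
      · rw [h, ld_getLast? hβ] at hp1d
        exact getLast?_isAB hβ hβab hp1d
  rw [List.getLast?_eq_getLast hs, ← hpdef, hpeq]
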